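/- arXiv:2212.07551 — 3 statements merged into one kernel-verified Lean document; each statement's English description precedes it below -/
import Mathlib

section
/- (Theorem 2, optimal weights for non-uniform sampling.) Let q ∈ ℝ^d be a query vector and v_1, …, v_n ∈ ℝ^d atom vectors with ∑_{j=1}^d √(q_j² ∑_{i=1}^n v_{ij}²) > 0. For a probability vector w ∈ ℝ^d (w_j > 0, ∑_j w_j = 1), let J be categorical with P(J = j) = w_j and X_{iJ} := v_{iJ} q_J / (d w_J). Then the weights w*_j := √(q_j² ∑_{i=1}^n v_{ij}²) / ∑_{k=1}^d √(q_k² ∑_{i=1}^n v_{ik}²), for j = 1, …, d, minimize the combined variance ∑_{i=1}^n Var_{J∼P_w}[X_{iJ}] over all probability vectors w with positive entries, subject to ∑_{j=1}^d w_j = 1. -/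
open Finset

/-- The importance-weighted estimator `X_{iJ} = v_{iJ} q_J / (d w_J)` of the normalized inner
product, evaluated at coordinate `j`. -/
noncomputable def impEst (d n : ℕ) (v : Fin n → Fin d → ℝ) (q : Fin d → ℝ)
    (w : Fin d → ℝ) (i : Fin n) (j : Fin d) : ℝ :=
  v i j * q j / (d * w j)

/-- The mean `E_{J ∼ P_w}[X_{iJ}]` of the importance-weighted estimator for atom `i`, where
`J` is categorical with `P(J = j) = w_j`. -/
noncomputable def impMean (d n : ℕ) (v : Fin n → Fin d → ℝ) (q : Fin d → ℝ)
    (w : Fin d → ℝ) (i : Fin n) : ℝ :=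
  ∑ j, w j * impEst d n v q w i j

/-- The variance `Var_{J ∼ P_w}[X_{iJ}] = E[(X_{iJ} - E[X_{iJ}])²]` of the importance-weighted
estimator for atom `i`, where `J` is categorical with `P(J = j) = w_j`. -/
noncomputable def impVar (d n : ℕ) (v : Fin n → Fin d → ℝ) (q : Fin d → ℝ)
    (w : Fin d → ℝ) (i : Fin n) : ℝ :=
  ∑ j, w j * (impEst d n v q w i j - impMean d n v q w i) ^ 2

/-- The combined variance `∑_{i ∈ [n]} Var_{J ∼ P_w}[X_{iJ}]` across all atoms. -/
noncomputable def combinedVar (d n : ℕ) (v : Fin n → Fin d → ℝ) (q : Fin d → ℝ)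
    (w : Fin d → ℝ) : ℝ :=
  ∑ i, impVar d n v q w i

/-- The optimal sampling weights of Theorem 2:
`w*_j = √(q_j² ∑_i v_{ij}²) / ∑_k √(q_k² ∑_i v_{ik}²)`. -/
noncomputable def optWeights (d n : ℕ) (v : Fin n → Fin d → ℝ) (q : Fin d → ℝ)
    (j : Fin d) : ℝ :=
  Real.sqrt (q j ^ 2 * ∑ i, v i j ^ 2) / ∑ k, Real.sqrt (q k ^ 2 * ∑ i, v i k ^ 2)

lemma combinedVar_formula (d n : ℕ) (hd : 0 < d) (q : Fin d → ℝ) (v : Fin n → Fin d → ℝ)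
    (w : Fin d → ℝ) (hw1 : ∑ j, w j = 1)
    (hz : ∀ j, w j = 0 → ∀ i, v i j * q j = 0) :
    combinedVar d n v q w =
      (∑ j, (q j ^ 2 * ∑ i, v i j ^ 2) / ((d : ℝ) ^ 2 * w j))
        - ∑ i, ((∑ j, v i j * q j) / d) ^ 2 := by
  have hd0 : (d : ℝ) ≠ 0 := Nat.cast_ne_zero.mpr hd.ne'
  have hmean : ∀ i, impMean d n v q w i = (∑ j, v i j * q j) / d := by
    intro i
    rw [impMean, Finset.sum_div]
    refine Finset.sum_congr rfl fun j _ => ?_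
    rcases eq_or_ne (w j) 0 with h | h
    · simp [impEst, h, hz j h i]
    · rw [impEst]; field_simp
  have hsq : ∀ i j, w j * impEst d n v q w i j ^ 2
      = (v i j * q j) ^ 2 / ((d : ℝ) ^ 2 * w j) := by
    intro i j
    rcases eq_or_ne (w j) 0 with h | h
    · simp [impEst, h, hz j h i]
    · rw [impEst]; field_simp
  have hvar : ∀ i, impVar d n v q w i
      = (∑ j, (v i j * q j) ^ 2 / ((d : ℝ) ^ 2 * w j)) - ((∑ j, v i j * q j) / d) ^ 2 := by
    intro i
    have h1 : impVar d n v q w i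
        = (∑ j, w j * impEst d n v q w i j ^ 2) - impMean d n v q w i ^ 2 := by
      rw [impVar]
      calc ∑ j, w j * (impEst d n v q w i j - impMean d n v q w i) ^ 2
          = ∑ j, (w j * impEst d n v q w i j ^ 2
              - 2 * impMean d n v q w i * (w j * impEst d n v q w i j)
              + impMean d n v q w i ^ 2 * w j) :=
            Finset.sum_congr rfl fun j _ => by ring
        _ = (∑ j, w j * impEst d n v q w i j ^ 2)
              - 2 * impMean d n v q w i * (∑ j, w j * impEst d n v q w i j)
              + impMean d n v q w i ^ 2 * (∑ j, w j) := by
            rw [Finset.sum_add_distrib, Finset.sum_sub_distrib, ← Finset.mul_sum,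
              ← Finset.mul_sum]
        _ = _ := by rw [← impMean, hw1]; ring
    rw [h1, hmean i]
    congr 1
    exact Finset.sum_congr rfl fun j _ => hsq i j
  rw [combinedVar]
  simp_rw [hvar]
  rw [Finset.sum_sub_distrib]
  congr 1
  rw [Finset.sum_comm]
  refine Finset.sum_congr rfl fun j _ => ?_
  rw [← Finset.sum_div]
  congr 1
  rw [Finset.mul_sum]
  exact Finset.sum_congr rfl fun i _ => by ring

set_option maxHeartbeats 1000000 in
/-- **Theorem 2 (optimal weights for non-uniform sampling).**
Let `q ∈ ℝ^d` be a query and `v_1, …, v_n ∈ ℝ^d` atoms with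
`∑_j √(q_j² ∑_i v_{ij}²) > 0`. The weights
`w*_j = √(q_j² ∑_i v_{ij}²) / ∑_k √(q_k² ∑_i v_{ik}²)` form a probability vector and
minimize the combined variance `∑_i Var_{J ∼ P_w}[X_{iJ}]` of the importance-weighted
estimators `X_{iJ} = v_{iJ} q_J / (d w_J)` over all probability vectors `w` with positive
entries summing to one. -/
theorem optimal_weights (d n : ℕ) (hd : 0 < d) (q : Fin d → ℝ) (v : Fin n → Fin d → ℝ)
    (hpos : 0 < ∑ j, Real.sqrt (q j ^ 2 * ∑ i, v i j ^ 2)) :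
    (∀ j, 0 ≤ optWeights d n v q j) ∧ (∑ j, optWeights d n v q j = 1) ∧
      ∀ w : Fin d → ℝ, (∀ j, 0 < w j) → ∑ j, w j = 1 →
        combinedVar d n v q (optWeights d n v q) ≤ combinedVar d n v q w := by
  have hd0 : (d : ℝ) ≠ 0 := Nat.cast_ne_zero.mpr hd.ne'
  set a : Fin d → ℝ := fun j => q j ^ 2 * ∑ i, v i j ^ 2 with ha
  have ha0 : ∀ j, 0 ≤ a j := fun j =>
    mul_nonneg (sq_nonneg _) (Finset.sum_nonneg fun i _ => sq_nonneg _)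
  set S : ℝ := ∑ k, Real.sqrt (a k) with hS
  have hS0 : 0 < S := hpos
  have hw : ∀ j, optWeights d n v q j = Real.sqrt (a j) / S := fun j => rfl
  have hnn : ∀ j, 0 ≤ optWeights d n v q j := fun j =>
    div_nonneg (Real.sqrt_nonneg _) hS0.le
  have hsum : ∑ j, optWeights d n v q j = 1 := by
    simp_rw [hw]
    rw [← Finset.sum_div, ← hS, div_self hS0.ne']
  refine ⟨hnn, hsum, fun w hwpos hwsum => ?_⟩
  have hzstar : ∀ j, optWeights d n v q j = 0 → ∀ i, v i j * q j = 0 := by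
    intro j hj i
    rw [hw j, div_eq_zero_iff] at hj
    have hsj : Real.sqrt (a j) = 0 := by
      rcases hj with h | h
      · exact h
      · exact absurd h hS0.ne'
    have haj : a j = 0 := by
      have := Real.sqrt_eq_zero (ha0 j) |>.mp hsj
      exact this
    have hle : q j ^ 2 * v i j ^ 2 ≤ a j := by
      rw [ha]
      exact mul_le_mul_of_nonneg_left
        (Finset.single_le_sum (fun k _ => sq_nonneg (v k j)) (Finset.mem_univ i))
        (sq_nonneg _)
    have h0 : (v i j * q j) ^ 2 = 0 := by
      have h1 : (v i j * q j) ^ 2 ≤ 0 := by rw [mul_pow]; nlinarith [sq_nonneg (v i j * q j)]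
      exact le_antisymm h1 (sq_nonneg _)
    exact pow_eq_zero_iff (two_ne_zero) |>.mp h0
  have hzw : ∀ j, w j = 0 → ∀ i, v i j * q j = 0 := fun j hj =>
    absurd hj (hwpos j).ne'
  rw [combinedVar_formula d n hd q v _ hsum hzstar,
    combinedVar_formula d n hd q v w hwsum hzw]
  apply sub_le_sub_right
  have hstar : ∑ j, a j / ((d : ℝ) ^ 2 * optWeights d n v q j) = S ^ 2 / (d : ℝ) ^ 2 := by
    have : ∀ j, a j / ((d : ℝ) ^ 2 * optWeights d n v q j)
        = Real.sqrt (a j) * S / (d : ℝ) ^ 2 := by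
      intro j
      rw [hw j]
      rcases eq_or_lt_of_le (ha0 j) with h | h
      · rw [← h]
        simp
      · have hsj : 0 < Real.sqrt (a j) := Real.sqrt_pos.mpr h
        rw [div_eq_div_iff (by positivity) (by positivity)]
        have : Real.sqrt (a j) * Real.sqrt (a j) = a j := Real.mul_self_sqrt (ha0 j)
        field_simp
        have this2 : Real.sqrt (a j) ^ 2 = q j ^ 2 * ∑ i, v i j ^ 2 := by
          rw [Real.sq_sqrt (ha0 j)]
        linear_combination (-1:ℝ) * this2
    simp_rw [this]
    rw [← Finset.sum_div, ← Finset.sum_mul, ← hS]; ring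
  rw [hstar]
  have key : S ^ 2 ≤ ∑ j, a j / w j := by
    have := Finset.sq_sum_div_le_sum_sq_div Finset.univ (fun j => Real.sqrt (a j))
      (fun j _ => hwpos j)
    rw [hwsum, div_one] at this
    calc S ^ 2 = (∑ j, Real.sqrt (a j)) ^ 2 := by rw [hS]
      _ ≤ ∑ j, Real.sqrt (a j) ^ 2 / w j := this
      _ = ∑ j, a j / w j := Finset.sum_congr rfl fun j _ => by
          rw [Real.sq_sqrt (ha0 j)]
  calc S ^ 2 / (d : ℝ) ^ 2 ≤ (∑ j, a j / w j) / (d : ℝ) ^ 2 := by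
        gcongr
    _ = ∑ j, a j / ((d : ℝ) ^ 2 * w j) := by
        rw [Finset.sum_div]
        exact Finset.sum_congr rfl fun j _ => by
          rw [div_div, mul_comm]
end

section
/- Let q ∈ ℝ^d be a query vector and v_1, …, v_n ∈ ℝ^d atom vectors with ∑_{j=1}^d √(q_j² ∑_{i=1}^n v_{ij}²) > 0, and let μ_i := (1/d) ∑_{j=1}^d v_{ij} q_j. The minimum of the combined variance ∑_{i=1}^n Var_{J∼P_w}[X_{iJ}] over probability vectors w with positive entries equals (1/d²) (∑_{j=1}^d √(q_j² ∑_{i=1}^n v_{ij}²))² − ∑_{i=1}^n μ_i². -/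
open Finset

lemma impMean_eq (d n : ℕ) (hd : 0 < d) (v : Fin n → Fin d → ℝ) (q : Fin d → ℝ)
    (w : Fin d → ℝ) (hw : ∀ j, 0 < w j) (i : Fin n) :
    impMean d n v q w i = (1 / d : ℝ) * ∑ j, v i j * q j := by
  have hd' : (d : ℝ) ≠ 0 := Nat.cast_ne_zero.mpr hd.ne'
  rw [impMean, Finset.mul_sum]
  refine Finset.sum_congr rfl fun j _ => ?_
  rw [impEst]
  field_simp [(hw j).ne']

lemma impVar_eq (d n : ℕ) (hd : 0 < d) (v : Fin n → Fin d → ℝ) (q : Fin d → ℝ)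
    (w : Fin d → ℝ) (hw : ∀ j, 0 < w j) (hw1 : ∑ j, w j = 1) (i : Fin n) :
    impVar d n v q w i =
      (∑ j, (v i j * q j) ^ 2 / ((d : ℝ) ^ 2 * w j)) -
        ((1 / d : ℝ) * ∑ j, v i j * q j) ^ 2 := by
  have hd' : (d : ℝ) ≠ 0 := Nat.cast_ne_zero.mpr hd.ne'
  have hm := impMean_eq d n hd v q w hw i
  set m := impMean d n v q w i with hmdef
  have key : ∀ j, w j * (impEst d n v q w i j - m) ^ 2 =
      (v i j * q j) ^ 2 / ((d : ℝ) ^ 2 * w j)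
        - 2 * m * (w j * impEst d n v q w i j) + m ^ 2 * w j := by
    intro j
    rw [impEst]
    field_simp [(hw j).ne']
    ring
  rw [impVar]
  simp_rw [← hmdef, key]
  rw [Finset.sum_add_distrib, Finset.sum_sub_distrib, ← Finset.mul_sum, ← Finset.mul_sum]
  have hmm : ∑ j, w j * impEst d n v q w i j = m := rfl
  rw [hmm, hw1, hm]
  ring

lemma combinedVar_eq (d n : ℕ) (hd : 0 < d) (v : Fin n → Fin d → ℝ) (q : Fin d → ℝ)
    (w : Fin d → ℝ) (hw : ∀ j, 0 < w j) (hw1 : ∑ j, w j = 1) :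
    combinedVar d n v q w =
      (1 / (d : ℝ) ^ 2) * (∑ j, (q j ^ 2 * ∑ i, v i j ^ 2) / w j) -
        ∑ i, ((1 / d : ℝ) * ∑ j, v i j * q j) ^ 2 := by
  rw [combinedVar]
  simp_rw [impVar_eq d n hd v q w hw hw1]
  rw [Finset.sum_sub_distrib, Finset.sum_comm, Finset.mul_sum]
  congr 1
  refine Finset.sum_congr rfl fun j _ => ?_
  rw [← Finset.sum_div]
  have h : ∑ i, (v i j * q j) ^ 2 = q j ^ 2 * ∑ i, v i j ^ 2 := by
    rw [Finset.mul_sum]; exact Finset.sum_congr rfl fun i _ => by ring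
  rw [h]
  field_simp [(hw j).ne']

/-- **Minimum value of the combined variance.**
Let `q ∈ ℝ^d` be a query and `v_1, …, v_n ∈ ℝ^d` atoms with
`∑_j √(q_j² ∑_i v_{ij}²) > 0`, and let `μ_i = (1/d) ∑_j v_{ij} q_j`. The infimum of the
combined variance `∑_i Var_{J ∼ P_w}[X_{iJ}]` over probability vectors `w` with positive
entries equals `(1/d²) (∑_j √(q_j² ∑_i v_{ij}²))² − ∑_i μ_i²`. -/
theorem combined_variance_min_value (d n : ℕ) (hd : 0 < d) (q : Fin d → ℝ)
    (v : Fin n → Fin d → ℝ)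
    (hpos : 0 < ∑ j, Real.sqrt (q j ^ 2 * ∑ i, v i j ^ 2)) :
    IsGLB {x : ℝ | ∃ w : Fin d → ℝ, (∀ j, 0 < w j) ∧ (∑ j, w j = 1) ∧
        x = combinedVar d n v q w}
      ((1 / (d : ℝ) ^ 2) * (∑ j, Real.sqrt (q j ^ 2 * ∑ i, v i j ^ 2)) ^ 2 -
        ∑ i, ((1 / d : ℝ) * ∑ j, v i j * q j) ^ 2) := by
  have hd' : (d : ℝ) ≠ 0 := Nat.cast_ne_zero.mpr hd.ne'
  have hd0 : (0 : ℝ) < d := by exact_mod_cast hd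
  set a : Fin d → ℝ := fun j => q j ^ 2 * ∑ i, v i j ^ 2 with ha
  have hanneg : ∀ j, 0 ≤ a j := fun j =>
    mul_nonneg (sq_nonneg _) (Finset.sum_nonneg fun i _ => sq_nonneg _)
  set S : ℝ := ∑ j, Real.sqrt (a j) with hS
  set C : ℝ := ∑ i, ((1 / d : ℝ) * ∑ j, v i j * q j) ^ 2 with hC
  have hSpos : 0 < S := hpos
  constructor
  · -- lower bound
    rintro x ⟨w, hw, hw1, rfl⟩
    rw [combinedVar_eq d n hd v q w hw hw1]
    have hcs : S ^ 2 ≤ ∑ j, a j / w j := by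
      have := Finset.sq_sum_div_le_sum_sq_div Finset.univ (fun j => Real.sqrt (a j))
        (g := w) (fun j _ => hw j)
      rw [hw1, div_one] at this
      refine this.trans_eq (Finset.sum_congr rfl fun j _ => ?_)
      rw [Real.sq_sqrt (hanneg j)]
    have h2 : (1 / (d : ℝ) ^ 2) * S ^ 2 ≤ (1 / (d : ℝ) ^ 2) * ∑ j, a j / w j := by
      apply mul_le_mul_of_nonneg_left hcs
      positivity
    linarith
  · -- greatest lower bound
    rintro b hb
    refine le_of_forall_pos_le_add fun ε hε => ?_
    set s : ℝ := ε * d / S with hs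
    have hspos : 0 < s := by positivity
    set w : Fin d → ℝ := fun j => (Real.sqrt (a j) + s) / (S + d * s) with hwdef
    have hden : 0 < S + d * s := by positivity
    have hw : ∀ j, 0 < w j := fun j =>
      div_pos (by have := Real.sqrt_nonneg (a j); linarith) hden
    have hw1 : ∑ j, w j = 1 := by
      rw [hwdef, ← Finset.sum_div, Finset.sum_add_distrib, Finset.sum_const,
        Finset.card_univ, Fintype.card_fin, nsmul_eq_mul, ← hS, div_self hden.ne']
    have hbound : ∑ j, a j / w j ≤ S ^ 2 + d * s * S := by
      have hterm : ∀ j, a j / w j ≤ Real.sqrt (a j) * (S + d * s) := by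
        intro j
        rw [hwdef, div_div_eq_mul_div, div_le_iff₀ (by have := Real.sqrt_nonneg (a j); linarith)]
        have : a j ≤ Real.sqrt (a j) * (Real.sqrt (a j) + s) := by
          have h1 : Real.sqrt (a j) * Real.sqrt (a j) = a j := Real.mul_self_sqrt (hanneg j)
          nlinarith [Real.sqrt_nonneg (a j), hspos.le]
        calc a j * (S + d * s) ≤ Real.sqrt (a j) * (Real.sqrt (a j) + s) * (S + d * s) := by
              nlinarith [hden]
          _ = Real.sqrt (a j) * (S + d * s) * (Real.sqrt (a j) + s) := by ring
      calc ∑ j, a j / w j ≤ ∑ j, Real.sqrt (a j) * (S + d * s) :=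
            Finset.sum_le_sum fun j _ => hterm j
        _ = S * (S + d * s) := by rw [← Finset.sum_mul]
        _ = S ^ 2 + d * s * S := by ring
    have hmem : combinedVar d n v q w ∈ {x : ℝ | ∃ w : Fin d → ℝ, (∀ j, 0 < w j) ∧
        (∑ j, w j = 1) ∧ x = combinedVar d n v q w} := ⟨w, hw, hw1, rfl⟩
    have h1 := hb hmem
    rw [combinedVar_eq d n hd v q w hw hw1] at h1
    have h2 : (1 / (d : ℝ) ^ 2) * ∑ j, a j / w j ≤
        (1 / (d : ℝ) ^ 2) * (S ^ 2 + d * s * S) := by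
      apply mul_le_mul_of_nonneg_left hbound
      positivity
    have h3 : (1 / (d : ℝ) ^ 2) * (d * s * S) = ε := by
      rw [hs]
      field_simp
    calc b ≤ (1 / (d : ℝ) ^ 2) * ∑ j, a j / w j - C := h1
      _ ≤ (1 / (d : ℝ) ^ 2) * (S ^ 2 + d * s * S) - C := by linarith
      _ = (1 / (d : ℝ) ^ 2) * S ^ 2 - C + ε := by rw [mul_add]; linarith
end

section
/- (Theorem 1, correctness of BanditMIPS.) Let q ∈ ℝ^d and v_1, …, v_n ∈ ℝ^d, let μ_i := (1/d) ∑_{j=1}^d v_{ij} q_j, and assume the maximizer i* = argmax_i μ_i is unique. Let J_1, J_2, … be i.i.d. uniform on {1,…,d}, assume each sample v_{i J_t} q_{J_t} is σ-sub-Gaussian about its mean μ_i, and let δ ∈ (0,1). Consider the successive-elimination procedure that maintains a surviving set S (initialized to {1,…,n}), at each step m samples the coordinate J_m, updates μ̂_i(m) = (1/m) ∑_{t=1}^m v_{i J_t} q_{J_t} for all i ∈ S, sets C_m = σ√(2 log(4 n m²/δ)/m), replaces S by {i ∈ S : μ̂_i(m) + C_m ≥ max_{i'∈S} μ̂_{i'}(m)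 − C_m}, stops when |S| = 1 or m = d, and if more than one atom remains computes their inner products exactly and returns the argmax. Then with probability at least 1 − δ this procedure returns i*. -/
open Finset MeasureTheory ProbabilityTheory ENNReal

/-- The normalized inner product `μ_i = (1/d) ∑_j v_{ij} q_j` of atom `i` with the query. -/
noncomputable def normIP (d n : ℕ) (v : Fin n → Fin d → ℝ) (q : Fin d → ℝ) (i : Fin n) : ℝ :=
  (1 / d : ℝ) * ∑ j, v i j * q j

/-- The running estimate `μ̂_i(m) = (1/m) ∑_{t=1}^m v_{i J_t} q_{J_t}` after `m` sampled
coordinates (the samples being indexed by `t ∈ {0, …, m-1}`). -/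
noncomputable def runningEst {Ω : Type*} (d n : ℕ) (v : Fin n → Fin d → ℝ) (q : Fin d → ℝ)
    (J : ℕ → Ω → Fin d) (i : Fin n) (m : ℕ) (ω : Ω) : ℝ :=
  (1 / m : ℝ) * ∑ t ∈ Finset.range m, v i (J t ω) * q (J t ω)

/-- The anytime confidence width `C_m = σ √(2 log(4 n m² / δ) / m)` used by BanditMIPS. -/
noncomputable def confWidth (n : ℕ) (σ δ : ℝ) (m : ℕ) : ℝ :=
  σ * Real.sqrt (2 * Real.log (4 * n * m ^ 2 / δ) / m)

/-- The surviving set of the successive-elimination procedure: `S_0 = {1, …, n}`, and at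
step `m + 1` (provided more than one atom survives) the set is replaced by
`{i ∈ S : μ̂_i(m+1) + C_{m+1} ≥ max_{i' ∈ S} μ̂_{i'}(m+1) − C_{m+1}}`; once `|S| ≤ 1` the
procedure has stopped and the set is frozen. -/
noncomputable def surviveSet (n : ℕ) (μhat : Fin n → ℕ → ℝ) (C : ℕ → ℝ) : ℕ → Finset (Fin n)
  | 0 => Finset.univ
  | m + 1 =>
    let S := surviveSet n μhat C m
    if h : 1 < S.card then
      S.filter fun i =>
        (S.sup' (Finset.card_pos.mp (lt_trans Nat.zero_lt_one h))
            fun i' => μhat i' (m + 1)) - C (m + 1) ≤ μhat i (m + 1) + C (m + 1)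
    else S

/-- The output of BanditMIPS: run the successive elimination for at most `d` steps
(stopping early once a single atom survives, since the surviving set is then frozen); if
more than one atom remains, compute the (normalized) inner products `μ` exactly and return
the argmax over the surviving set.  (When exactly one atom remains it is likewise the
argmax over the singleton surviving set.) -/
noncomputable def banditOutput (n d : ℕ) (μ : Fin n → ℝ) (μhat : Fin n → ℕ → ℝ)
    (C : ℕ → ℝ) (dflt : Fin n) : Fin n :=
  if h : (surviveSet n μhat C d).Nonempty then
    Classical.choose ((surviveSet n μhat C d).exists_max_image μ h)
  else dflt


section BanditAux

open Real

lemma banditAux_istar_mem {n : ℕ} (μ : Fin n → ℝ) (μhat : Fin n → ℕ → ℝ) (C : ℕ → ℝ)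
    (istar : Fin n) (hmax : ∀ i, μ i ≤ μ istar) (d : ℕ)
    (hgood : ∀ m, 1 ≤ m → m ≤ d → ∀ i, |μhat i m - μ i| ≤ C m) :
    ∀ m, m ≤ d → istar ∈ surviveSet n μhat C m := by
  intro m
  induction m with
  | zero => intro _; simp [surviveSet]
  | succ m ih =>
    intro hmd
    have hS := ih (le_trans (Nat.le_succ m) hmd)
    rw [surviveSet]
    by_cases h : 1 < (surviveSet n μhat C m).card
    · rw [dif_pos h]
      refine Finset.mem_filter.mpr ⟨hS, ?_⟩
      have hg := hgood (m+1) (Nat.succ_le_succ (Nat.zero_le m)) hmd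
      have hsup : ((surviveSet n μhat C m).sup'
          (Finset.card_pos.mp (lt_trans Nat.zero_lt_one h)) fun i' => μhat i' (m+1)) ≤
          μhat istar (m+1) + C (m+1) + C (m+1) := by
        apply Finset.sup'_le
        intro i' _
        have h1 := (abs_le.mp (hg i')).1
        have h2 := (abs_le.mp (hg i')).2
        have h3 := (abs_le.mp (hg istar)).1
        have h4 := hmax i'
        linarith
      linarith
    · rw [dif_neg h]; exact hS

lemma banditAux_output_eq {n d : ℕ} (μ : Fin n → ℝ) (μhat : Fin n → ℕ → ℝ) (C : ℕ → ℝ)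
    (istar dflt : Fin n) (hmax : ∀ i, i ≠ istar → μ i < μ istar)
    (hmem : istar ∈ surviveSet n μhat C d) :
    banditOutput n d μ μhat C dflt = istar := by
  have hne : (surviveSet n μhat C d).Nonempty := ⟨istar, hmem⟩
  rw [banditOutput, dif_pos hne]
  obtain ⟨hmemc, hle⟩ := Classical.choose_spec ((surviveSet n μhat C d).exists_max_image μ hne)
  by_contra hc
  exact absurd (hle istar hmem) (not_le.mpr (hmax _ hc))

variable {Ω : Type*} [MeasurableSpace Ω] {P : Measure Ω} [IsProbabilityMeasure P]

lemma banditAux_chernoff {Y : ℕ → Ω → ℝ} (hmeas : ∀ t, Measurable (Y t))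
    (hbdd : ∀ t, ∃ B, ∀ ω, |Y t ω| ≤ B)
    (hindep : iIndepFun Y P)
    {σ2 : ℝ}
    (hmgf : ∀ t l, ∫ ω, Real.exp (l * Y t ω) ∂P ≤ Real.exp (l ^ 2 * σ2 / 2))
    (m : ℕ) (a l : ℝ) (hl : 0 ≤ l) :
    P {ω | a ≤ ∑ t ∈ Finset.range m, Y t ω} ≤
      ENNReal.ofReal (Real.exp (-l * a + m * (l ^ 2 * σ2 / 2))) := by
  have hint : ∀ t, Integrable (fun ω => Real.exp (l * Y t ω)) P := by
    intro t
    obtain ⟨B, hB⟩ := hbdd t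
    refine ⟨(((hmeas t).const_mul l).exp).aestronglyMeasurable, ?_⟩
    refine HasFiniteIntegral.of_bounded (C := Real.exp (|l| * B)) (ae_of_all _ fun ω => ?_)
    rw [Real.norm_eq_abs, abs_of_pos (Real.exp_pos _)]
    apply Real.exp_le_exp.mpr
    calc l * Y t ω ≤ |l * Y t ω| := le_abs_self _
      _ = |l| * |Y t ω| := abs_mul _ _
      _ ≤ |l| * B := mul_le_mul_of_nonneg_left (hB ω) (abs_nonneg l)
  have hsum := measure_ge_le_exp_mul_mgf (μ := P) (X := ∑ t ∈ Finset.range m, Y t) a hl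
      (hindep.integrable_exp_mul_sum hmeas (fun t _ => hint t))
  rw [hindep.mgf_sum hmeas] at hsum
  have hprod : ∏ t ∈ Finset.range m, mgf (Y t) P l ≤ Real.exp (m * (l ^ 2 * σ2 / 2)) := by
    calc ∏ t ∈ Finset.range m, mgf (Y t) P l
        ≤ ∏ _t ∈ Finset.range m, Real.exp (l ^ 2 * σ2 / 2) :=
          Finset.prod_le_prod (fun t _ => mgf_nonneg) (fun t _ => by
            simpa [mgf] using hmgf t l)
      _ = Real.exp (m * (l ^ 2 * σ2 / 2)) := by
          rw [Finset.prod_const, Finset.card_range, ← Real.exp_nat_mul]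
  have hset : {ω | a ≤ ∑ t ∈ Finset.range m, Y t ω}
      = {ω | a ≤ (∑ t ∈ Finset.range m, Y t) ω} := by
    simp [Finset.sum_apply]
  rw [hset]
  have hfin : P {ω | a ≤ (∑ t ∈ Finset.range m, Y t) ω} ≠ ⊤ := measure_ne_top P _
  calc P {ω | a ≤ (∑ t ∈ Finset.range m, Y t) ω}
      = ENNReal.ofReal (P {ω | a ≤ (∑ t ∈ Finset.range m, Y t) ω}).toReal :=
        (ENNReal.ofReal_toReal hfin).symm
    _ ≤ ENNReal.ofReal (Real.exp (-l * a + m * (l ^ 2 * σ2 / 2))) := by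
        apply ENNReal.ofReal_le_ofReal
        rw [Real.exp_add]
        refine hsum.trans ?_
        exact mul_le_mul_of_nonneg_left hprod (le_of_lt (Real.exp_pos _))

lemma banditAux_tail_zero {Y : ℕ → Ω → ℝ} (hmeas : ∀ t, Measurable (Y t))
    (hbdd : ∀ t, ∃ B, ∀ ω, |Y t ω| ≤ B)
    (hindep : iIndepFun Y P)
    (hmgf : ∀ t l, ∫ ω, Real.exp (l * Y t ω) ∂P ≤ Real.exp (l ^ 2 * 0 / 2))
    (m : ℕ) :
    P {ω | 0 < ∑ t ∈ Finset.range m, Y t ω} = 0 := by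
  have key : ∀ ε : ℝ, 0 < ε → P {ω | ε ≤ ∑ t ∈ Finset.range m, Y t ω} = 0 := by
    intro ε hε
    have hle : ∀ k : ℕ, (P {ω | ε ≤ ∑ t ∈ Finset.range m, Y t ω}).toReal
        ≤ Real.exp (-ε) ^ k := by
      intro k
      have h := banditAux_chernoff hmeas hbdd hindep hmgf m ε (k : ℝ) (Nat.cast_nonneg k)
      have h2 : (P {ω | ε ≤ ∑ t ∈ Finset.range m, Y t ω}).toReal
          ≤ Real.exp (-(k : ℝ) * ε + m * ((k:ℝ) ^ 2 * 0 / 2)) :=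
        ENNReal.toReal_le_of_le_ofReal (le_of_lt (Real.exp_pos _)) h
      calc (P {ω | ε ≤ ∑ t ∈ Finset.range m, Y t ω}).toReal
          ≤ Real.exp (-(k : ℝ) * ε + m * ((k:ℝ) ^ 2 * 0 / 2)) := h2
        _ = Real.exp ((k : ℝ) * (-ε)) := by ring_nf
        _ = Real.exp (-ε) ^ k := by rw [Real.exp_nat_mul]
    have hlim : Filter.Tendsto (fun k : ℕ => Real.exp (-ε) ^ k) Filter.atTop (nhds 0) := by
      apply tendsto_pow_atTop_nhds_zero_of_lt_one (le_of_lt (Real.exp_pos _))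
      rw [Real.exp_lt_one_iff]
      linarith
    have h0 : (P {ω | ε ≤ ∑ t ∈ Finset.range m, Y t ω}).toReal ≤ 0 :=
      ge_of_tendsto hlim (Filter.Eventually.of_forall hle)
    have hfin : P {ω | ε ≤ ∑ t ∈ Finset.range m, Y t ω} ≠ ⊤ := measure_ne_top P _
    have heq := le_antisymm h0 ENNReal.toReal_nonneg
    rcases (ENNReal.toReal_eq_zero_iff _).mp heq with h | h
    · exact h
    · exact absurd h hfin
  have hsub : {ω | 0 < ∑ t ∈ Finset.range m, Y t ω}
      ⊆ ⋃ k : ℕ, {ω | 1 / ((k : ℝ) + 1) ≤ ∑ t ∈ Finset.range m, Y t ω} := by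
    intro ω hω
    have h0 : (0:ℝ) < ∑ t ∈ Finset.range m, Y t ω := hω
    obtain ⟨k, hk⟩ := exists_nat_one_div_lt h0
    exact Set.mem_iUnion.mpr ⟨k, le_of_lt hk⟩
  refine measure_mono_null hsub (measure_iUnion_null fun k => key _ (by positivity))

lemma banditAux_main_tail {Y : ℕ → Ω → ℝ} (hmeas : ∀ t, Measurable (Y t))
    (hbdd : ∀ t, ∃ B, ∀ ω, |Y t ω| ≤ B)
    (hindep : iIndepFun Y P)
    {σ : ℝ} (hσ : 0 ≤ σ)
    (hmgf : ∀ t l, ∫ ω, Real.exp (l * Y t ω) ∂P ≤ Real.exp (l ^ 2 * σ ^ 2 / 2))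
    (n m : ℕ) (hn : 0 < n) (hm : 1 ≤ m) {δ : ℝ} (hδ0 : 0 < δ) (hδ1 : δ < 1) :
    P {ω | (m : ℝ) * confWidth n σ δ m < ∑ t ∈ Finset.range m, Y t ω} ≤
      ENNReal.ofReal (δ / (4 * n * m ^ 2)) := by
  set A : ℝ := 4 * n * m ^ 2 / δ with hA
  have hm' : (1:ℝ) ≤ (m:ℝ) := by exact_mod_cast hm
  have hn' : (1:ℝ) ≤ (n:ℝ) := by exact_mod_cast hn
  have hA1 : 1 ≤ A := by
    rw [hA, le_div_iff₀ hδ0]; nlinarith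
  have hlogA : 0 ≤ Real.log A := Real.log_nonneg hA1
  have hA0 : 0 < A := lt_of_lt_of_le one_pos hA1
  have hinv : A⁻¹ = δ / (4 * n * m ^ 2) := by
    rw [hA, inv_div]
  rcases eq_or_lt_of_le hσ with hσ0 | hσpos
  · have hC : confWidth n σ δ m = 0 := by rw [confWidth, ← hσ0, zero_mul]
    rw [hC, mul_zero]
    have h0 := banditAux_tail_zero hmeas hbdd hindep (fun t l => by
      simpa [← hσ0] using hmgf t l) m
    rw [h0]; exact zero_le
  · set C := confWidth n σ δ m with hCdef
    have hCsq : C ^ 2 = σ ^ 2 * (2 * Real.log A / m) := by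
      rw [hCdef, confWidth, mul_pow, Real.sq_sqrt (by positivity)]
    have hC0 : 0 ≤ C := by rw [hCdef, confWidth]; positivity
    set l := C / σ ^ 2 with hl
    have hl0 : 0 ≤ l := by positivity
    have h := banditAux_chernoff hmeas hbdd hindep hmgf m ((m:ℝ) * C) l hl0
    have hm0 : (m:ℝ) ≠ 0 := by linarith
    have hσ2 : σ ^ 2 ≠ 0 := by positivity
    have h1 : -l * ((m:ℝ) * C) + (m:ℝ) * (l ^ 2 * σ ^ 2 / 2)
        = -((m:ℝ) * C ^ 2) / (2 * σ ^ 2) := by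
      field_simp [hl]
      have e : l * σ ^ 2 = C := by rw [hl]; exact div_mul_cancel₀ C hσ2
      linear_combination (l * σ ^ 2 - C) * e
    have h2 : -((m:ℝ) * C ^ 2) / (2 * σ ^ 2) = - Real.log A := by
      rw [hCsq]; field_simp
    have hexp : Real.exp (-l * ((m:ℝ) * C) + (m:ℝ) * (l ^ 2 * σ ^ 2 / 2))
        = δ / (4 * n * m ^ 2) := by
      rw [h1, h2, Real.exp_neg, Real.exp_log hA0, hinv]
    calc P {ω | (m : ℝ) * C < ∑ t ∈ Finset.range m, Y t ω}
        ≤ P {ω | (m : ℝ) * C ≤ ∑ t ∈ Finset.range m, Y t ω} :=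
          measure_mono (fun ω hω => le_of_lt (Set.mem_setOf.mp hω))
      _ ≤ ENNReal.ofReal (δ / (4 * n * m ^ 2)) := by rw [← hexp]; exact h

lemma banditAux_sum_inv_sq : ∀ d : ℕ, ∑ m ∈ Finset.Icc 1 d, (1:ℝ)/(m:ℝ)^2 ≤ 2 - 2/((d:ℝ)+1) := by
  intro d
  induction d with
  | zero => norm_num
  | succ d ih =>
    rw [Finset.sum_Icc_succ_top (Nat.one_le_iff_ne_zero.mpr (Nat.succ_ne_zero d))]
    have hd : (0:ℝ) < (d:ℝ)+1 := by positivity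
    have hd2 : (0:ℝ) < (d:ℝ)+2 := by positivity
    have key : (1:ℝ)/((d:ℝ)+1)^2 ≤ 2/((d:ℝ)+1) - 2/((d:ℝ)+2) := by
      rw [div_sub_div _ _ (ne_of_gt hd) (ne_of_gt hd2),
        div_le_div_iff₀ (by positivity) (by positivity)]
      nlinarith
    push_cast
    have hcast : 2/((d:ℝ)+1+1) = 2/((d:ℝ)+2) := by ring_nf
    linarith

end BanditAux

/-- **Theorem 1 (correctness of BanditMIPS).**
Let `q ∈ ℝ^d`, `v_1, …, v_n ∈ ℝ^d`, `μ_i = (1/d) ∑_j v_{ij} q_j` with unique maximizer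
`i*`, and let `J_1, J_2, …` be i.i.d. uniform on `{1, …, d}` with each sample
`v_{i J_t} q_{J_t}` being `σ`-sub-Gaussian about its mean `μ_i`. Then, for `δ ∈ (0,1)`,
the successive-elimination procedure with anytime confidence widths
`C_m = σ √(2 log(4 n m² / δ) / m)` returns `i*` with probability at least `1 − δ`. -/
theorem banditMIPS_correct
    {Ω : Type*} [MeasurableSpace Ω] (P : Measure Ω) [IsProbabilityMeasure P]
    (d n : ℕ) (hd : 0 < d) (q : Fin d → ℝ) (v : Fin n → Fin d → ℝ)
    (istar : Fin n) (hstar : ∀ i, i ≠ istar → normIP d n v q i < normIP d n v q istar)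
    (J : ℕ → Ω → Fin d) (hJmeas : ∀ t, Measurable (J t))
    (hindep : iIndepFun J P)
    (hunif : ∀ (t : ℕ) (j : Fin d), P {ω | J t ω = j} = (d : ℝ≥0∞)⁻¹)
    (σ : ℝ) (hσ : 0 ≤ σ)
    (hsubG : ∀ (i : Fin n) (t : ℕ) (l : ℝ),
      ∫ ω, Real.exp (l * (v i (J t ω) * q (J t ω) - normIP d n v q i)) ∂P ≤
        Real.exp (l ^ 2 * σ ^ 2 / 2))
    (δ : ℝ) (hδ0 : 0 < δ) (hδ1 : δ < 1) :
    1 - ENNReal.ofReal δ ≤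
      P {ω | banditOutput n d (normIP d n v q)
          (fun i m => runningEst d n v q J i m ω)
          (confWidth n σ δ) ⟨0, istar.pos⟩ = istar} := by
  classical
  set μ : Fin n → ℝ := normIP d n v q with hμ
  set C : ℕ → ℝ := confWidth n σ δ with hC
  have hn : 0 < n := istar.pos
  have hmaxle : ∀ i, μ i ≤ μ istar := by
    intro i
    by_cases h : i = istar
    · rw [h]
    · exact le_of_lt (hstar i h)
  set G : Set Ω := {ω | ∀ m, 1 ≤ m → m ≤ d → ∀ i, |runningEst d n v q J i m ω - μ i| ≤ C m}
    with hG
  have hGsub : G ⊆ {ω | banditOutput n d μ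
      (fun i m => runningEst d n v q J i m ω) C ⟨0, istar.pos⟩ = istar} := by
    intro ω hω
    exact banditAux_output_eq μ _ C istar _ (fun i hi => hstar i hi)
      (banditAux_istar_mem μ _ C istar hmaxle d hω d le_rfl)
  set Y : Fin n → ℕ → Ω → ℝ := fun i t ω => v i (J t ω) * q (J t ω) - μ i with hY
  set Bup : ℕ → Fin n → Set Ω :=
    fun m i => {ω | (m:ℝ) * C m < ∑ t ∈ Finset.range m, Y i t ω} with hBup
  set Bdn : ℕ → Fin n → Set Ω :=
    fun m i => {ω | (m:ℝ) * C m < ∑ t ∈ Finset.range m, -(Y i t ω)} with hBdn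
  -- the complement of the good event is covered by the tail events
  have hGc : Gᶜ ⊆ ⋃ m ∈ Finset.Icc 1 d,
      ⋃ i ∈ (Finset.univ : Finset (Fin n)), (Bup m i ∪ Bdn m i) := by
    intro ω hω
    simp only [hG, Set.mem_compl_iff, Set.mem_setOf_eq, not_forall] at hω
    obtain ⟨m, h1, h2, i, hlt⟩ := hω
    have hlt' : C m < |runningEst d n v q J i m ω - μ i| := not_le.mp hlt
    have hm' : (0:ℝ) < (m:ℝ) := by
      have : (1:ℝ) ≤ (m:ℝ) := by exact_mod_cast h1
      linarith
    have hsumY : ∑ t ∈ Finset.range m, Y i t ω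
        = (∑ t ∈ Finset.range m, v i (J t ω) * q (J t ω)) - (m:ℝ) * μ i := by
      rw [hY]
      rw [Finset.sum_sub_distrib, Finset.sum_const, Finset.card_range, nsmul_eq_mul]
    have hrel : runningEst d n v q J i m ω - μ i
        = (1/(m:ℝ)) * ∑ t ∈ Finset.range m, Y i t ω := by
      rw [hsumY, runningEst]
      field_simp
    have habs : (m:ℝ) * C m < |∑ t ∈ Finset.range m, Y i t ω| := by
      rw [hrel, abs_mul, abs_of_pos (by positivity : (0:ℝ) < 1/(m:ℝ))] at hlt'
      calc (m:ℝ) * C m < (m:ℝ) * (1/(m:ℝ) * |∑ t ∈ Finset.range m, Y i t ω|) :=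
            (mul_lt_mul_iff_right₀ hm').mpr hlt'
        _ = |∑ t ∈ Finset.range m, Y i t ω| := by field_simp
    simp only [Set.mem_iUnion]
    refine ⟨m, Finset.mem_Icc.mpr ⟨h1, h2⟩, i, Finset.mem_univ i, ?_⟩
    rcases lt_abs.mp habs with h | h
    · exact Or.inl h
    · refine Or.inr ?_
      show (m:ℝ) * C m < ∑ t ∈ Finset.range m, -(Y i t ω)
      rw [Finset.sum_neg_distrib]
      linarith
  -- measurability, boundedness, independence, mgf bound for the centered samples
  have hmeasg : ∀ (g : Fin d → ℝ) (t : ℕ), Measurable (fun ω => g (J t ω)) :=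
    fun g t => (measurable_of_countable g).comp (hJmeas t)
  have hYmeas : ∀ i t, Measurable (Y i t) := fun i t =>
    hmeasg (fun j => v i j * q j - μ i) t
  have hYbdd : ∀ i t, ∃ B, ∀ ω, |Y i t ω| ≤ B := by
    intro i t
    refine ⟨∑ j, |v i j * q j - μ i|, fun ω => ?_⟩
    exact Finset.single_le_sum (f := fun j => |v i j * q j - μ i|)
      (fun j _ => abs_nonneg _) (Finset.mem_univ (J t ω))
  have hYindep : ∀ i, iIndepFun (Y i) P :=
    fun i => hindep.comp (fun t j => v i j * q j - μ i)
      (fun t => measurable_of_countable _)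
  have hYmgf : ∀ i t l, ∫ ω, Real.exp (l * Y i t ω) ∂P ≤ Real.exp (l ^ 2 * σ ^ 2 / 2) :=
    fun i t l => hsubG i t l
  have hYnmeas : ∀ i t, Measurable (fun ω => -(Y i t ω)) := fun i t => (hYmeas i t).neg
  have hYnbdd : ∀ i t, ∃ B, ∀ ω, |(-(Y i t ω) : ℝ)| ≤ B := by
    intro i t
    obtain ⟨B, hB⟩ := hYbdd i t
    exact ⟨B, fun ω => by rw [abs_neg]; exact hB ω⟩
  have hYnindep : ∀ i, iIndepFun
      (fun t ω => -(Y i t ω)) P :=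
    fun i => hindep.comp (fun t j => -(v i j * q j - μ i))
      (fun t => measurable_of_countable _)
  have hYnmgf : ∀ i t l, ∫ ω, Real.exp (l * -(Y i t ω)) ∂P ≤ Real.exp (l ^ 2 * σ ^ 2 / 2) := by
    intro i t l
    have h := hsubG i t (-l)
    simp only [neg_mul, neg_neg, mul_neg, neg_sq] at h ⊢
    simpa using h
  -- tail bounds
  have hup : ∀ m ∈ Finset.Icc 1 d, ∀ i : Fin n,
      P (Bup m i) ≤ ENNReal.ofReal (δ / (4 * n * m ^ 2)) := by
    intro m hm i
    exact banditAux_main_tail (hYmeas i) (hYbdd i) (hYindep i) hσ (hYmgf i) n m hn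
      (Finset.mem_Icc.mp hm).1 hδ0 hδ1
  have hdn : ∀ m ∈ Finset.Icc 1 d, ∀ i : Fin n,
      P (Bdn m i) ≤ ENNReal.ofReal (δ / (4 * n * m ^ 2)) := by
    intro m hm i
    exact banditAux_main_tail (hYnmeas i) (hYnbdd i) (hYnindep i) hσ (hYnmgf i) n m hn
      (Finset.mem_Icc.mp hm).1 hδ0 hδ1
  have hpair : ∀ m ∈ Finset.Icc 1 d, ∀ i : Fin n,
      P (Bup m i ∪ Bdn m i) ≤ ENNReal.ofReal (δ / (2 * n * m ^ 2)) := by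
    intro m hm i
    have hmr : (1:ℝ) ≤ (m:ℝ) := by exact_mod_cast (Finset.mem_Icc.mp hm).1
    have hnr : (1:ℝ) ≤ (n:ℝ) := by exact_mod_cast hn
    calc P (Bup m i ∪ Bdn m i) ≤ P (Bup m i) + P (Bdn m i) := measure_union_le _ _
      _ ≤ ENNReal.ofReal (δ / (4 * n * m ^ 2)) + ENNReal.ofReal (δ / (4 * n * m ^ 2)) :=
          add_le_add (hup m hm i) (hdn m hm i)
      _ = ENNReal.ofReal (δ / (2 * n * m ^ 2)) := by
          rw [← ENNReal.ofReal_add (by positivity) (by positivity)]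
          congr 1
          field_simp
          ring
  -- union bound and summation
  have hGcP : P Gᶜ ≤ ENNReal.ofReal δ := by
    have step1 : P Gᶜ ≤ ∑ m ∈ Finset.Icc 1 d, ∑ i ∈ (Finset.univ : Finset (Fin n)),
        P (Bup m i ∪ Bdn m i) := by
      refine (measure_mono hGc).trans ?_
      refine (measure_biUnion_finset_le _ _).trans ?_
      exact Finset.sum_le_sum fun m _ => measure_biUnion_finset_le _ _
    have step2 : ∑ m ∈ Finset.Icc 1 d, ∑ i ∈ (Finset.univ : Finset (Fin n)),
        P (Bup m i ∪ Bdn m i) ≤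
        ∑ m ∈ Finset.Icc 1 d, ENNReal.ofReal (δ / (2 * m ^ 2)) := by
      refine Finset.sum_le_sum fun m hm => ?_
      calc ∑ i ∈ (Finset.univ : Finset (Fin n)), P (Bup m i ∪ Bdn m i)
          ≤ ∑ _i ∈ (Finset.univ : Finset (Fin n)), ENNReal.ofReal (δ / (2 * n * m ^ 2)) :=
            Finset.sum_le_sum fun i _ => hpair m hm i
        _ = (n : ℝ≥0∞) * ENNReal.ofReal (δ / (2 * n * m ^ 2)) := by
            rw [Finset.sum_const, Finset.card_univ, Fintype.card_fin, nsmul_eq_mul]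
        _ = ENNReal.ofReal (δ / (2 * m ^ 2)) := by
            rw [← ENNReal.ofReal_natCast n, ← ENNReal.ofReal_mul (Nat.cast_nonneg n)]
            congr 1
            have hn0 : (n:ℝ) ≠ 0 := Nat.cast_ne_zero.mpr hn.ne'
            have hm1 : 1 ≤ m := (Finset.mem_Icc.mp hm).1
            have hm0 : (m:ℝ) ≠ 0 := by
              have : (1:ℝ) ≤ (m:ℝ) := by exact_mod_cast hm1
              linarith
            field_simp
    have step3 : ∑ m ∈ Finset.Icc 1 d, ENNReal.ofReal (δ / (2 * m ^ 2))
        ≤ ENNReal.ofReal δ := by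
      rw [← ENNReal.ofReal_sum_of_nonneg (fun m _ => by positivity)]
      apply ENNReal.ofReal_le_ofReal
      have hs := banditAux_sum_inv_sq d
      have hrw : ∑ m ∈ Finset.Icc 1 d, δ / (2 * (m:ℝ) ^ 2)
          = (δ/2) * ∑ m ∈ Finset.Icc 1 d, (1:ℝ)/(m:ℝ)^2 := by
        rw [Finset.mul_sum]
        refine Finset.sum_congr rfl fun m _ => ?_
        ring
      rw [hrw]
      have h2 : ∑ m ∈ Finset.Icc 1 d, (1:ℝ)/(m:ℝ)^2 ≤ 2 := by
        have : (0:ℝ) < (d:ℝ)+1 := by positivity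
        have : 0 ≤ 2/((d:ℝ)+1) := by positivity
        linarith
      calc (δ/2) * ∑ m ∈ Finset.Icc 1 d, (1:ℝ)/(m:ℝ)^2 ≤ (δ/2) * 2 :=
            mul_le_mul_of_nonneg_left h2 (by positivity)
        _ = δ := by ring
    exact step1.trans (step2.trans step3)
  -- conclude
  rw [tsub_le_iff_right]
  calc (1 : ℝ≥0∞) = P Set.univ := measure_univ.symm
    _ = P (G ∪ Gᶜ) := by rw [Set.union_compl_self]
    _ ≤ P G + P Gᶜ := measure_union_le _ _
    _ ≤ P {ω | banditOutput n d μ (fun i m => runningEst d n v q J i m ω) C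
          ⟨0, istar.pos⟩ = istar} + ENNReal.ofReal δ :=
        add_le_add (measure_mono hGsub) hGcP
end
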